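/- Every eventually periodic coloring φ of T is of bounded type: every vertex of T has a finite type set. -/

import Mathlib

open SimpleGraph

/-- Equivalence of colored `n`-balls around `x` and `y`: a graph isomorphism between the
induced subgraphs on the balls, sending center to center and preserving the coloring. -/
def BallEquiv {V A : Type*} (T : SimpleGraph V) (φ : V → A) (n : ℕ) (x y : V) : Prop :=
  ∃ f : {v : V // T.dist x v ≤ n} ≃ {v : V // T.dist y v ≤ n},
    ((f ⟨x, by simp [SimpleGraph.dist_self]⟩ : {v : V // T.dist y v ≤ n}) : V) = y ∧
    (∀ u w : {v : V // T.dist x v ≤ n}, T.Adj (u : V) (w : V) ↔ T.Adj (f u : V) (f w : V)) ∧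
    ∀ v : {v : V // T.dist x v ≤ n}, φ (f v : V) = φ (v : V)

/-- Two vertices are in the same class if a color-preserving automorphism of `T`
sends one to the other. -/
def SameClass {V A : Type*} (T : SimpleGraph V) (φ : V → A) (x y : V) : Prop :=
  ∃ g : V ≃ V, (∀ u w : V, T.Adj (g u) (g w) ↔ T.Adj u w) ∧ g x = y ∧ ∀ v, φ (g v) = φ v

/-- Subword complexity: the number of equivalence classes of colored `n`-balls. -/
noncomputable def ballComplexity {V A : Type*} (T : SimpleGraph V) (φ : V → A) (n : ℕ) : ℕ :=
  Nat.card (Quot (BallEquiv T φ n))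

/-- A coloring is periodic if it is invariant under a subgroup of the automorphism group
of `T` having finitely many orbits on vertices. -/
def IsPeriodicColoring {V A : Type*} (T : SimpleGraph V) (φ : V → A) : Prop :=
  ∃ Γ : Subgroup (Equiv.Perm V),
    (∀ γ ∈ Γ, ∀ u w : V, T.Adj (γ u) (γ w) ↔ T.Adj u w) ∧
    (∀ γ ∈ Γ, ∀ v, φ (γ v) = φ v) ∧
    Finite (Quot (fun x y : V => ∃ γ ∈ Γ, γ x = y))

/-- The colored `n`-ball around `x` is special. -/
def IsSpecial {V A : Type*} (T : SimpleGraph V) (φ : V → A) (n : ℕ) (x : V) : Prop :=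
  ∃ y z : V, BallEquiv T φ n x y ∧ BallEquiv T φ n x z ∧ ¬ BallEquiv T φ (n + 1) y z

/-- The type set of a vertex. -/
def TypeSet {V A : Type*} (T : SimpleGraph V) (φ : V → A) (x : V) : Set ℕ :=
  {n : ℕ | IsSpecial T φ n x}

/-- The maximal type of a vertex of bounded type (`-1` if the type set is empty). -/
noncomputable def maxType {V A : Type*} (T : SimpleGraph V) (φ : V → A) (x : V) : ℤ :=
  sSup (insert (-1) ((fun n : ℕ => (n : ℤ)) '' TypeSet T φ x))

/-- The coloring is Sturmian if its subword complexity is `n + 2`. -/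
def IsSturmian {V A : Type*} (T : SimpleGraph V) (φ : V → A) : Prop :=
  ∀ n : ℕ, ballComplexity T φ n = n + 2

/-- Eventually periodic coloring. -/
def IsEventuallyPeriodic {V A : Type*} (T : SimpleGraph V) (φ : V → A) : Prop :=
  ∃ K : Set V, K.Nonempty ∧ K.Finite ∧ (T.induce K).Connected ∧
    ∀ v : (Kᶜ : Set V), ∃ ψ : V → A, IsPeriodicColoring T ψ ∧
      ∀ w : (Kᶜ : Set V), (T.induce (Kᶜ : Set V)).Reachable v w → ψ (w : V) = φ (w : V)

/-- The vertex set of the `n`-branch from `x` towards its neighbor `x'`. -/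
def branchSet {V : Type*} (T : SimpleGraph V) (n : ℕ) (x x' : V) : Set V :=
  insert x {y : V | T.dist x y ≤ n ∧ T.dist y x' < T.dist y x}

/-- Equivalence of colored `n`-branches. -/
def BranchEquiv {V A : Type*} (T : SimpleGraph V) (φ : V → A) (n : ℕ)
    (x x' y y' : V) : Prop :=
  ∃ f : (branchSet T n x x') ≃ (branchSet T n y y'),
    ((f ⟨x, Set.mem_insert x _⟩ : (branchSet T n y y')) : V) = y ∧
    (∀ u w : (branchSet T n x x'), T.Adj (u : V) (w : V) ↔ T.Adj (f u : V) (f w : V)) ∧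
    ∀ v : (branchSet T n x x'), φ (f v : V) = φ (v : V)

/-- A coloring of `K` appears exactly once if the only connected subgraph of `T`
color-isomorphic to it is `K` itself. -/
def AppearsOnce {V A : Type*} (T : SimpleGraph V) (φ : V → A) (K : Set V) : Prop :=
  ∀ K' : Set V, (T.induce K').Connected →
    (∃ f : K ≃ K', (∀ u w : K, T.Adj (u : V) (w : V) ↔ T.Adj (f u : V) (f w : V)) ∧
      ∀ v : K, φ (f v : V) = φ (v : V)) → K' = K


namespace Stmt9Aux

variable {V A : Type*} {T : SimpleGraph V}

/-- Cross-coloring ball equivalence. -/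
def CBE (T : SimpleGraph V) (φ ψ : V → A) (n : ℕ) (x y : V) : Prop :=
  ∃ f : {v : V // T.dist x v ≤ n} ≃ {v : V // T.dist y v ≤ n},
    ((f ⟨x, by simp [SimpleGraph.dist_self]⟩ : {v : V // T.dist y v ≤ n}) : V) = y ∧
    (∀ u w : {v : V // T.dist x v ≤ n}, T.Adj (u : V) (w : V) ↔ T.Adj (f u : V) (f w : V)) ∧
    ∀ v : {v : V // T.dist x v ≤ n}, ψ (f v : V) = φ (v : V)

lemma adj_dist_le_one {x y : V} (h : T.Adj x y) : T.dist x y ≤ 1 := by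
  simpa using SimpleGraph.dist_le (Walk.cons h Walk.nil)

lemma dist_getVert_le (hconn : T.Connected) {x v : V} (p : T.Walk x v) (i : ℕ) :
    T.dist x (p.getVert i) ≤ i := by
  induction p generalizing i with
  | nil => simp [Walk.getVert, SimpleGraph.dist_self]
  | @cons a b c h q ih =>
    cases i with
    | zero => simp [Walk.getVert, SimpleGraph.dist_self]
    | succ i =>
      have h1 : T.dist a ((Walk.cons h q).getVert (i+1)) ≤
          T.dist a b + T.dist b (q.getVert i) := by
        rw [Walk.getVert_cons_succ]; exact hconn.dist_triangle
      have h2 := ih i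
      have h3 := adj_dist_le_one h
      omega

lemma exists_adj_dist (hconn : T.Connected) {x v : V} {m : ℕ} (h : T.dist x v = m + 1) :
    ∃ u, T.Adj u v ∧ T.dist x u = m := by
  obtain ⟨p, hp⟩ := hconn.exists_walk_length_eq_dist x v
  rw [h] at hp
  refine ⟨p.getVert m, ?_, ?_⟩
  · have := p.adj_getVert_succ (i := m) (by omega)
    rwa [show p.getVert (m+1) = v from hp ▸ p.getVert_length] at this
  · have h1 := dist_getVert_le hconn p m
    have h2 : T.dist x v ≤ T.dist x (p.getVert m) + T.dist (p.getVert m) v :=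
      hconn.dist_triangle
    have h3 : T.dist (p.getVert m) v ≤ 1 := by
      have := p.adj_getVert_succ (i := m) (by omega)
      rw [show p.getVert (m+1) = v from hp ▸ p.getVert_length] at this
      exact adj_dist_le_one this
    omega

end Stmt9Aux

namespace Stmt9Aux

variable {V A : Type*} {T : SimpleGraph V}

lemma step (hconn : T.Connected) {n : ℕ} {x y : V}
    (f : {v : V // T.dist x v ≤ n} ≃ {v : V // T.dist y v ≤ n})
    (hc : ((f ⟨x, by simp [SimpleGraph.dist_self]⟩ : {v : V // T.dist y v ≤ n}) : V) = y)
    (hadj : ∀ u w : {v : V // T.dist x v ≤ n}, T.Adj (u : V) (w : V) ↔ T.Adj (f u : V) (f w : V))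
    (m : ℕ)
    (IH1 : ∀ m' < m, ∀ v : {v : V // T.dist x v ≤ n}, T.dist x v = m' → T.dist y (f v : V) = m')
    (IH2 : ∀ m' < m, ∀ v : {v : V // T.dist y v ≤ n}, T.dist y v = m' → T.dist x (f.symm v : V) = m') :
    ∀ v : {v : V // T.dist x v ≤ n}, T.dist x (v : V) = m → T.dist y (f v : V) = m := by
  intro v hv
  cases m with
  | zero =>
    have hxv : x = (v : V) := hconn.dist_eq_zero_iff.mp hv
    have : v = ⟨x, by simp [SimpleGraph.dist_self]⟩ := Subtype.ext hxv.symm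
    rw [this, hc, SimpleGraph.dist_self]
  | succ m =>
    obtain ⟨u, hu_adj, hu_dist⟩ := exists_adj_dist hconn hv
    have hu_le : T.dist x u ≤ n := by have := v.2; omega
    have h1 : T.dist y (f ⟨u, hu_le⟩ : V) = m := IH1 m (by omega) ⟨u, hu_le⟩ hu_dist
    have h2 : T.Adj (f ⟨u, hu_le⟩ : V) (f v : V) := (hadj ⟨u, hu_le⟩ v).mp hu_adj
    have h3 : T.dist y (f v : V) ≤ m + 1 := by
      have := hconn.dist_triangle (u := y) (v := (f ⟨u, hu_le⟩ : V)) (w := (f v : V))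
      have := adj_dist_le_one h2
      omega
    rcases Nat.lt_or_ge (T.dist y (f v : V)) (m + 1) with hlt | hge
    · exfalso
      have := IH2 _ hlt (f v) rfl
      rw [Equiv.symm_apply_apply] at this
      omega
    · omega

lemma cbe_dist_all (hconn : T.Connected) {n : ℕ} {x y : V}
    (f : {v : V // T.dist x v ≤ n} ≃ {v : V // T.dist y v ≤ n})
    (hc : ((f ⟨x, by simp [SimpleGraph.dist_self]⟩ : {v : V // T.dist y v ≤ n}) : V) = y)
    (hadj : ∀ u w : {v : V // T.dist x v ≤ n}, T.Adj (u : V) (w : V) ↔ T.Adj (f u : V) (f w : V)) :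
    ∀ m : ℕ, (∀ v : {v : V // T.dist x v ≤ n}, T.dist x v = m → T.dist y (f v : V) = m)
      ∧ (∀ v : {v : V // T.dist y v ≤ n}, T.dist y v = m → T.dist x (f.symm v : V) = m) := by
  have hc2 : f ⟨x, by simp [SimpleGraph.dist_self]⟩ = ⟨y, by simp [SimpleGraph.dist_self]⟩ :=
    Subtype.ext hc
  have hc' : ((f.symm ⟨y, by simp [SimpleGraph.dist_self]⟩ : {v : V // T.dist x v ≤ n}) : V) = x := by
    rw [← hc2, Equiv.symm_apply_apply]
  have hadj' : ∀ u w : {v : V // T.dist y v ≤ n},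
      T.Adj (u : V) (w : V) ↔ T.Adj (f.symm u : V) (f.symm w : V) := by
    intro u w
    conv_lhs => rw [← Equiv.apply_symm_apply f u, ← Equiv.apply_symm_apply f w]
    exact (hadj _ _).symm
  intro m
  induction m using Nat.strong_induction_on with
  | _ m IH =>
    constructor
    · exact step hconn f hc hadj m (fun m' h => (IH m' h).1) (fun m' h => (IH m' h).2)
    · refine step hconn f.symm hc' hadj' m (fun m' h => (IH m' h).2) ?_
      intro m' h v hv
      simpa using (IH m' h).1 v hv

lemma cbe_dist (hconn : T.Connected) {n : ℕ} {x y : V}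
    (f : {v : V // T.dist x v ≤ n} ≃ {v : V // T.dist y v ≤ n})
    (hc : ((f ⟨x, by simp [SimpleGraph.dist_self]⟩ : {v : V // T.dist y v ≤ n}) : V) = y)
    (hadj : ∀ u w : {v : V // T.dist x v ≤ n}, T.Adj (u : V) (w : V) ↔ T.Adj (f u : V) (f w : V))
    (v : {v : V // T.dist x v ≤ n}) : T.dist y (f v : V) = T.dist x (v : V) :=
  (cbe_dist_all hconn f hc hadj (T.dist x (v : V))).1 v rfl

lemma cbe_dist_symm (hconn : T.Connected) {n : ℕ} {x y : V}
    (f : {v : V // T.dist x v ≤ n} ≃ {v : V // T.dist y v ≤ n})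
    (hc : ((f ⟨x, by simp [SimpleGraph.dist_self]⟩ : {v : V // T.dist y v ≤ n}) : V) = y)
    (hadj : ∀ u w : {v : V // T.dist x v ≤ n}, T.Adj (u : V) (w : V) ↔ T.Adj (f u : V) (f w : V))
    (v : {v : V // T.dist y v ≤ n}) : T.dist x (f.symm v : V) = T.dist y (v : V) :=
  (cbe_dist_all hconn f hc hadj (T.dist y (v : V))).2 v rfl

end Stmt9Aux

namespace Stmt9Aux

variable {V A : Type*} {T : SimpleGraph V}

abbrev BallN (T : SimpleGraph V) (x : V) (n : ℕ) := {v : V // T.dist x v ≤ n}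

abbrev ctr (T : SimpleGraph V) (x : V) (n : ℕ) : BallN T x n :=
  ⟨x, by simp [SimpleGraph.dist_self]⟩

def IsBallIso (T : SimpleGraph V) (φ ψ : V → A) (n : ℕ) (x y : V)
    (f : BallN T x n ≃ BallN T y n) : Prop :=
  ((f (ctr T x n) : V) = y) ∧
  (∀ u w : BallN T x n, T.Adj (u : V) (w : V) ↔ T.Adj (f u : V) (f w : V)) ∧
  ∀ v : BallN T x n, ψ (f v : V) = φ (v : V)

lemma cbe_iff {φ ψ : V → A} {n : ℕ} {x y : V} :
    CBE T φ ψ n x y ↔ ∃ f, IsBallIso T φ ψ n x y f := Iff.rfl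

lemma ballEquiv_iff_cbe {φ : V → A} {n : ℕ} {x y : V} :
    BallEquiv T φ n x y ↔ CBE T φ φ n x y := Iff.rfl

/-- Canonical restriction of a ball isomorphism to a smaller radius. -/
def resData (hconn : T.Connected) {φ ψ : V → A} {n m : ℕ} {x y : V} (hmn : m ≤ n)
    (F : {f : BallN T x n ≃ BallN T y n // IsBallIso T φ ψ n x y f}) :
    {f : BallN T x m ≃ BallN T y m // IsBallIso T φ ψ m x y f} :=
  ⟨{ toFun := fun v => ⟨(F.1 ⟨(v : V), v.2.trans hmn⟩ : V), by
        rw [cbe_dist hconn F.1 F.2.1 F.2.2.1]; exact v.2⟩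
     invFun := fun v => ⟨(F.1.symm ⟨(v : V), v.2.trans hmn⟩ : V), by
        rw [cbe_dist_symm hconn F.1 F.2.1 F.2.2.1]; exact v.2⟩
     left_inv := fun v => by
        apply Subtype.ext
        simp
     right_inv := fun v => by
        apply Subtype.ext
        simp },
   by
     refine ⟨?_, ?_, ?_⟩
     · show (F.1 ⟨x, _⟩ : V) = y
       have : (⟨x, by simp [SimpleGraph.dist_self]⟩ : BallN T x n) = ctr T x n := rfl
       exact F.2.1
     · intro u w
       exact F.2.2.1 ⟨(u : V), u.2.trans hmn⟩ ⟨(w : V), w.2.trans hmn⟩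
     · intro v
       exact F.2.2.2 ⟨(v : V), v.2.trans hmn⟩⟩

lemma resData_coe (hconn : T.Connected) {φ ψ : V → A} {n m : ℕ} {x y : V} (hmn : m ≤ n)
    (F : {f : BallN T x n ≃ BallN T y n // IsBallIso T φ ψ n x y f}) (v : BallN T x m) :
    ((resData hconn hmn F).1 v : V) = (F.1 ⟨(v : V), v.2.trans hmn⟩ : V) := rfl

lemma cbe_mono (hconn : T.Connected) {φ ψ : V → A} {n m : ℕ} {x y : V} (hmn : m ≤ n)
    (h : CBE T φ ψ n x y) : CBE T φ ψ m x y := by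
  obtain ⟨f, hf⟩ := h
  exact ⟨(resData hconn hmn ⟨f, hf⟩).1, (resData hconn hmn ⟨f, hf⟩).2⟩

lemma cbe_symm {φ ψ : V → A} {n : ℕ} {x y : V} (h : CBE T φ ψ n x y) : CBE T ψ φ n y x := by
  obtain ⟨f, hc, hadj, hcol⟩ := h
  have hc2 : f (ctr T x n) = ctr T y n := Subtype.ext hc
  refine ⟨f.symm, ?_, ?_, ?_⟩
  · show (f.symm (ctr T y n) : V) = x
    rw [← hc2, Equiv.symm_apply_apply]
  · intro u w
    conv_lhs => rw [← Equiv.apply_symm_apply f u, ← Equiv.apply_symm_apply f w]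
    exact (hadj _ _).symm
  · intro v
    have := hcol (f.symm v)
    rw [Equiv.apply_symm_apply] at this
    exact this.symm

lemma cbe_trans {φ ψ χ : V → A} {n : ℕ} {x y z : V}
    (h1 : CBE T φ ψ n x y) (h2 : CBE T ψ χ n y z) : CBE T φ χ n x z := by
  obtain ⟨f, hcf, hadjf, hcolf⟩ := h1
  obtain ⟨g, hcg, hadjg, hcolg⟩ := h2
  have hcf2 : f (ctr T x n) = ctr T y n := Subtype.ext hcf
  refine ⟨f.trans g, ?_, ?_, ?_⟩
  · show (g (f (ctr T x n)) : V) = z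
    rw [hcf2]; exact hcg
  · intro u w
    exact (hadjf u w).trans (hadjg (f u) (f w))
  · intro v
    show χ (g (f v) : V) = φ (v : V)
    rw [hcolg (f v), hcolf v]

lemma cbe_refl {φ ψ : V → A} {n : ℕ} {x : V} (h : ∀ v : BallN T x n, ψ (v : V) = φ (v : V)) :
    CBE T φ ψ n x x :=
  ⟨Equiv.refl _, rfl, fun _ _ => Iff.rfl, h⟩

end Stmt9Aux

namespace Stmt9Aux

variable {V A : Type*} {T : SimpleGraph V}

lemma perm_dist_le (g : V ≃ V) (hadj : ∀ u w : V, T.Adj (g u) (g w) ↔ T.Adj u w)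
    (hconn : T.Connected) (u v : V) : T.dist (g u) (g v) ≤ T.dist u v := by
  obtain ⟨p, hp⟩ := hconn.exists_walk_length_eq_dist u v
  calc T.dist (g u) (g v)
      ≤ (p.map (⟨(g : V → V), fun {a b} h => (hadj a b).mpr h⟩ : T →g T)).length :=
        SimpleGraph.dist_le _
    _ = p.length := Walk.length_map _ _
    _ = T.dist u v := hp

lemma perm_dist (g : V ≃ V) (hadj : ∀ u w : V, T.Adj (g u) (g w) ↔ T.Adj u w)
    (hconn : T.Connected) (u v : V) : T.dist (g u) (g v) = T.dist u v := by
  refine le_antisymm (perm_dist_le g hadj hconn u v) ?_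
  have hadj' : ∀ u w : V, T.Adj (g.symm u) (g.symm w) ↔ T.Adj u w := by
    intro u w
    conv_rhs => rw [← Equiv.apply_symm_apply g u, ← Equiv.apply_symm_apply g w]
    exact (hadj _ _).symm
  have := perm_dist_le g.symm hadj' hconn (g u) (g v)
  simpa using this

lemma auto_cbe (hconn : T.Connected) {χ ψ : V → A} (g : V ≃ V)
    (hadj : ∀ u w : V, T.Adj (g u) (g w) ↔ T.Adj u w)
    (hcol : ∀ v, ψ (g v) = χ v) (n : ℕ) (x : V) : CBE T χ ψ n x (g x) := by
  refine ⟨{ toFun := fun v => ⟨g (v : V), by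
              rw [perm_dist g hadj hconn]; exact v.2⟩
            invFun := fun v => ⟨g.symm (v : V), by
              have := perm_dist g hadj hconn x (g.symm (v : V))
              rw [Equiv.apply_symm_apply] at this
              rw [← this]; exact v.2⟩
            left_inv := fun v => by apply Subtype.ext; simp
            right_inv := fun v => by apply Subtype.ext; simp }, rfl, ?_, ?_⟩
  · intro u w
    exact (hadj _ _).symm
  · intro v
    exact hcol _

lemma ball_finite (hconn : T.Connected) (hfin : ∀ v : V, (T.neighborSet v).Finite)
    (x : V) : ∀ n : ℕ, {v : V | T.dist x v ≤ n}.Finite := by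
  intro n
  induction n with
  | zero =>
    refine Set.Finite.subset (Set.finite_singleton x) ?_
    intro v hv
    simp only [Set.mem_setOf_eq, Nat.le_zero] at hv
    exact (hconn.dist_eq_zero_iff.mp hv).symm
  | succ n ih =>
    refine Set.Finite.subset (ih.union (Set.Finite.biUnion ih fun u _ => hfin u)) ?_
    intro v hv
    simp only [Set.mem_setOf_eq] at hv
    rcases Nat.lt_or_ge (T.dist x v) (n+1) with h | h
    · exact Or.inl (by simpa using Nat.lt_succ_iff.mp h)
    · have hd : T.dist x v = n + 1 := le_antisymm hv h
      obtain ⟨u, hu_adj, hu⟩ := exists_adj_dist hconn hd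
      exact Or.inr (Set.mem_biUnion (by simpa using hu.le)
        (by simpa [SimpleGraph.mem_neighborSet] using hu_adj))

lemma chain_subset {α : Type*} (S : ℕ → Set α) (hdec : ∀ n, S (n+1) ⊆ S n) :
    ∀ {a b : ℕ}, a ≤ b → S b ⊆ S a := by
  intro a b h
  induction h with
  | refl => exact subset_rfl
  | step h ih => exact (hdec _).trans ih

lemma antitone_stab {α : Type*} (S : ℕ → Set α) (hdec : ∀ n, S (n+1) ⊆ S n)
    (n₀ : ℕ) (hfin : (S n₀).Finite) : ∃ N, ∀ n, N ≤ n → S n = S N := by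
  have hfin' : ∀ n, n₀ ≤ n → (S n).Finite := fun n h =>
    hfin.subset (chain_subset S hdec h)
  set f : ℕ → ℕ := fun n => (S (n₀ + n)).ncard with hf
  have hmem : f 0 ∈ Set.range f := ⟨0, rfl⟩
  obtain ⟨n₁, hn₁⟩ := Nat.sInf_mem (Set.nonempty_of_mem hmem)
  refine ⟨n₀ + n₁, fun n hn => ?_⟩
  have h1 : S n ⊆ S (n₀ + n₁) := chain_subset S hdec hn
  refine Set.eq_of_subset_of_ncard_le h1 ?_ (hfin' _ (Nat.le_add_right _ _))
  have hn' : n = n₀ + (n - n₀) := by omega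
  have : f (n - n₀) ∈ Set.range f := ⟨_, rfl⟩
  have h2 : sInf (Set.range f) ≤ f (n - n₀) := Nat.sInf_le this
  rw [← hn₁] at h2
  calc (S (n₀ + n₁)).ncard = f n₁ := rfl
    _ ≤ f (n - n₀) := h2
    _ = (S n).ncard := by
        show (S (n₀ + (n - n₀))).ncard = (S n).ncard
        rw [← hn']

lemma iInter_nonempty {Q : Type*} [Finite Q] (C : ℕ → Set Q)
    (hdec : ∀ n, C (n+1) ⊆ C n) (hne : ∀ n, (C n).Nonempty) : ∃ c, ∀ n, c ∈ C n := by
  obtain ⟨N, hN⟩ := antitone_stab C hdec 0 (Set.toFinite _)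
  obtain ⟨c, hc⟩ := hne N
  refine ⟨c, fun n => ?_⟩
  rcases le_or_gt N n with h | h
  · rw [hN n h]; exact hc
  · exact chain_subset C hdec h.le hc

end Stmt9Aux

namespace Stmt9Aux

variable {V A : Type*} {T : SimpleGraph V}

lemma induce_adj_of {s : Set V} {a b : V} (ha : a ∈ s) (hb : b ∈ s) (h : T.Adj a b) :
    (T.induce s).Adj ⟨a, ha⟩ ⟨b, hb⟩ := by
  simp only [comap_adj, Function.Embedding.coe_subtype]
  exact h

lemma reachable_induce_of_walk {s : Set V} :
    ∀ {a b : V} (p : T.Walk a b) (hp : ∀ w ∈ p.support, w ∈ s),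
      (T.induce s).Reachable ⟨a, hp a p.start_mem_support⟩ ⟨b, hp b p.end_mem_support⟩ := by
  intro a b p
  induction p with
  | nil => intro hp; rfl
  | @cons a c b h q ih =>
    intro hp
    have hq : ∀ w ∈ q.support, w ∈ s := fun w hw => hp w (by simp [Walk.support_cons, hw])
    have ha : a ∈ s := hp a (by simp [Walk.support_cons])
    have hc : c ∈ s := hq c q.start_mem_support
    exact (Adj.reachable (induce_adj_of ha hc h)).trans (ih hq)

lemma dist_support_le {z v w : V} (p : T.Walk z v) (hw : w ∈ p.support) :
    T.dist z w ≤ p.length := by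
  classical
  exact le_trans (SimpleGraph.dist_le (p.takeUntil w hw)) (Walk.length_takeUntil_le p hw)

/-- First entry vertex into `K`. -/
lemma exists_boundary {K : Set V} :
    ∀ {z κ : V} (_ : T.Walk z κ) (hz : z ∉ K) (_ : κ ∈ K),
      ∃ a, ∃ ha : a ∉ K, (∃ κ' ∈ K, T.Adj a κ') ∧
        (T.induce (Kᶜ : Set V)).Reachable ⟨z, hz⟩ ⟨a, ha⟩ := by
  intro z κ p
  induction p with
  | nil => intro hz hκ; exact absurd hκ hz
  | @cons a c b h q ih =>
    intro hz hκ
    by_cases hc : c ∈ K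
    · exact ⟨a, hz, ⟨c, hc, h⟩, Reachable.refl _⟩
    · obtain ⟨a', ha', hb', hr⟩ := ih hc hκ
      exact ⟨a', ha', hb',
        (Adj.reachable (induce_adj_of (by simpa using hz) (by simpa using hc) h)).trans hr⟩

end Stmt9Aux

namespace Stmt9Aux

open CategoryTheory

variable {V A : Type*} {T : SimpleGraph V}

lemma resData_symm_coe (hconn : T.Connected) {φ ψ : V → A} {n m : ℕ} {x y : V} (hmn : m ≤ n)
    (F : {f : BallN T x n ≃ BallN T y n // IsBallIso T φ ψ n x y f}) (v : BallN T y m) :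
    ((resData hconn hmn F).1.symm v : V) = (F.1.symm ⟨(v : V), v.2.trans hmn⟩ : V) := rfl

lemma koenig (hconn : T.Connected)
    (hballfin : ∀ (y : V) (n : ℕ), {v : V | T.dist y v ≤ n}.Finite)
    {φ ψ : V → A} {x w₀ : V} (hyp : ∀ n, CBE T φ ψ n x w₀) :
    ∃ g : V ≃ V, (∀ u w : V, T.Adj (g u) (g w) ↔ T.Adj u w) ∧ ∀ v, ψ (g v) = φ v := by
  let X : ℕ → Type _ := fun n => {f : BallN T x n ≃ BallN T w₀ n // IsBallIso T φ ψ n x w₀ f}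
  have hXfin : ∀ n, Finite (X n) := by
    intro n
    haveI : Finite (BallN T x n) := (hballfin x n).to_subtype
    haveI : Finite (BallN T w₀ n) := (hballfin w₀ n).to_subtype
    infer_instance
  have hXne : ∀ n, Nonempty (X n) := fun n => (hyp n).elim (fun f hf => ⟨⟨f, hf⟩⟩)
  let F : ℕᵒᵖ ⥤ Type _ :=
    Functor.ofOpSequence (X := X) (fun n => TypeCat.ofHom (resData hconn (Nat.le_add_right n 1)))
  haveI : ∀ j : ℕᵒᵖ, Finite (F.obj j) := fun j => hXfin j.unop
  haveI : ∀ j : ℕᵒᵖ, Nonempty (F.obj j) := fun j => hXne j.unop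
  obtain ⟨s, hs⟩ := nonempty_sections_of_finite_inverse_system F
  let G : ∀ n, X n := fun n => s (Opposite.op n)
  have hcompat : ∀ n, resData hconn (Nat.le_add_right n 1) (G (n+1)) = G n := by
    intro n
    have := hs (j := Opposite.op (n+1)) (j' := Opposite.op n)
      (CategoryTheory.homOfLE (Nat.le_add_right n 1)).op
    rw [Functor.ofOpSequence_map_homOfLE_succ] at this
    exact this
  have Gcast : ∀ (v : V) (d n : ℕ) (hdn : d = n) (h1 : T.dist x v ≤ d) (h2 : T.dist x v ≤ n),
      ((G d).1 ⟨v, h1⟩ : V) = ((G n).1 ⟨v, h2⟩ : V) := by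
    rintro v d n rfl h1 h2; rfl
  have Gcast' : ∀ (v : V) (d n : ℕ) (hdn : d = n) (h1 : T.dist w₀ v ≤ d) (h2 : T.dist w₀ v ≤ n),
      ((G d).1.symm ⟨v, h1⟩ : V) = ((G n).1.symm ⟨v, h2⟩ : V) := by
    rintro v d n rfl h1 h2; rfl
  -- pointwise stability
  have L1 : ∀ (v : V) (n : ℕ) (h : T.dist x v ≤ n),
      ((G (T.dist x v)).1 ⟨v, le_rfl⟩ : V) = ((G n).1 ⟨v, h⟩ : V) := by
    intro v n
    induction n with
    | zero => intro h; exact Gcast v _ 0 (Nat.le_zero.mp h) le_rfl h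
    | succ n ih =>
      intro h
      rcases Nat.lt_or_ge (T.dist x v) (n+1) with hlt | hge
      · have hn : T.dist x v ≤ n := by omega
        rw [ih hn, ← hcompat n]
        rw [resData_coe]
      · exact Gcast v _ (n+1) (le_antisymm h hge) le_rfl h
  have L2 : ∀ (v : V) (n : ℕ) (h : T.dist w₀ v ≤ n),
      ((G (T.dist w₀ v)).1.symm ⟨v, le_rfl⟩ : V) = ((G n).1.symm ⟨v, h⟩ : V) := by
    intro v n
    induction n with
    | zero => intro h; exact Gcast' v _ 0 (Nat.le_zero.mp h) le_rfl h
    | succ n ih =>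
      intro h
      rcases Nat.lt_or_ge (T.dist w₀ v) (n+1) with hlt | hge
      · have hn : T.dist w₀ v ≤ n := by omega
        rw [ih hn, ← hcompat n]
        rw [resData_symm_coe]
      · exact Gcast' v _ (n+1) (le_antisymm h hge) le_rfl h
  let gf : V → V := fun v => ((G (T.dist x v)).1 ⟨v, le_rfl⟩ : V)
  let gs : V → V := fun v => ((G (T.dist w₀ v)).1.symm ⟨v, le_rfl⟩ : V)
  have hdist : ∀ (n : ℕ) (v : BallN T x n), T.dist w₀ ((G n).1 v : V) = T.dist x (v : V) :=
    fun n v => cbe_dist hconn (G n).1 (G n).2.1 (G n).2.2.1 v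
  have hdist' : ∀ (n : ℕ) (v : BallN T w₀ n), T.dist x ((G n).1.symm v : V) = T.dist w₀ (v : V) :=
    fun n v => cbe_dist_symm hconn (G n).1 (G n).2.1 (G n).2.2.1 v
  have hgf : ∀ (v : V) (n : ℕ) (h : T.dist x v ≤ n), gf v = ((G n).1 ⟨v, h⟩ : V) := by
    intro v n h; exact L1 v n h
  have hgs : ∀ (v : V) (n : ℕ) (h : T.dist w₀ v ≤ n), gs v = ((G n).1.symm ⟨v, h⟩ : V) := by
    intro v n h; exact L2 v n h
  have hleft : ∀ v, gs (gf v) = v := by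
    intro v
    set n := T.dist x v with hn
    have h1 : T.dist w₀ (gf v) ≤ n := by
      rw [hgf v n le_rfl, hdist n ⟨v, le_rfl⟩]
    rw [hgs (gf v) n h1]
    have : (⟨gf v, h1⟩ : BallN T w₀ n) = (G n).1 ⟨v, le_rfl⟩ :=
      Subtype.ext (hgf v n le_rfl)
    rw [this, Equiv.symm_apply_apply]
  have hright : ∀ v, gf (gs v) = v := by
    intro v
    set n := T.dist w₀ v with hn
    have h1 : T.dist x (gs v) ≤ n := by
      rw [hgs v n le_rfl, hdist' n ⟨v, le_rfl⟩]
    rw [hgf (gs v) n h1]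
    have : (⟨gs v, h1⟩ : BallN T x n) = (G n).1.symm ⟨v, le_rfl⟩ :=
      Subtype.ext (hgs v n le_rfl)
    rw [this, Equiv.apply_symm_apply]
  refine ⟨⟨gf, gs, hleft, hright⟩, ?_, ?_⟩
  · intro u w
    set n := max (T.dist x u) (T.dist x w) with hn
    have hu : T.dist x u ≤ n := le_max_left _ _
    have hw : T.dist x w ≤ n := le_max_right _ _
    show T.Adj (gf u) (gf w) ↔ T.Adj u w
    rw [hgf u n hu, hgf w n hw]
    exact ((G n).2.2.1 ⟨u, hu⟩ ⟨w, hw⟩).symm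
  · intro v
    show ψ (gf v) = φ v
    rw [hgf v (T.dist x v) le_rfl]
    exact (G (T.dist x v)).2.2.2 ⟨v, le_rfl⟩

end Stmt9Aux


open Stmt9Aux

theorem stmt_9 {V A : Type*} (T : SimpleGraph V) (φ : V → A) (k : ℕ)
    (hk : 2 ≤ k) (htree : T.IsTree) (hreg : ∀ v : V, (T.neighborSet v).ncard = k)
    (hep : IsEventuallyPeriodic T φ) :
    ∀ x : V, (TypeSet T φ x).Finite := by
  intro x
  classical
  have hep' : ∃ K : Set V, K.Nonempty ∧ K.Finite ∧ (T.induce K).Connected ∧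
      ∀ v : (Kᶜ : Set V), ∃ ψ : V → A, IsPeriodicColoring T ψ ∧
        ∀ w : (Kᶜ : Set V), (T.induce (Kᶜ : Set V)).Reachable v w → ψ (w : V) = φ (w : V) := hep
  obtain ⟨K, hKne, hKfin, _hKconn, hK⟩ := hep'
  have hconn : T.Connected := htree.isConnected
  have hnbfin : ∀ v : V, (T.neighborSet v).Finite := by
    intro v
    by_contra h
    have h0 : (T.neighborSet v).ncard = 0 := Set.Infinite.ncard h
    rw [hreg v] at h0
    omega
  have hballfin : ∀ (y : V) (n : ℕ), {v : V | T.dist y v ≤ n}.Finite :=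
    fun y n => ball_finite hconn hnbfin y n
  set S : ℕ → Set V := fun n => {z | CBE T φ φ n x z} with hS
  have hSdec : ∀ n, S (n+1) ⊆ S n := fun n z hz => cbe_mono hconn (Nat.le_succ n) hz
  suffices hstab : ∃ N, ∀ n, N ≤ n → S n = S N by
    obtain ⟨N, hN⟩ := hstab
    refine Set.Finite.subset (Set.finite_Iio N) ?_
    intro n hn
    have hn' : ∃ y z : V, BallEquiv T φ n x y ∧ BallEquiv T φ n x z ∧
        ¬ BallEquiv T φ (n + 1) y z := hn
    by_contra hlt
    have hNn : N ≤ n := by simpa using hlt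
    obtain ⟨y, z, hy, hz, hyz⟩ := hn'
    apply hyz
    have hy1 : y ∈ S (n+1) := by
      rw [hN (n+1) (by omega), ← hN n hNn]; exact hy
    have hz1 : z ∈ S (n+1) := by
      rw [hN (n+1) (by omega), ← hN n hNn]; exact hz
    exact (cbe_trans (cbe_symm hy1) hz1 : CBE T φ φ (n+1) y z)
  by_cases hcase : ∃ n₀ : ℕ, ∀ z ∈ S n₀, ∃ κ ∈ K, T.dist κ z ≤ n₀
  · obtain ⟨n₀, hn₀⟩ := hcase
    have hfin : (S n₀).Finite := by
      refine Set.Finite.subset (hKfin.biUnion fun κ _ => hballfin κ n₀) ?_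
      intro z hz
      obtain ⟨κ, hκ, hd⟩ := hn₀ z hz
      exact Set.mem_biUnion hκ hd
    exact antitone_stab S hSdec n₀ hfin
  · push_neg at hcase
    choose zf hzS hzdeep using hcase
    have hzK : ∀ n, zf n ∉ K := by
      intro n h
      have := hzdeep n (zf n) h
      simp [SimpleGraph.dist_self] at this
    obtain ⟨κ₀, hκ₀⟩ := hKne
    have hbd : ∀ n : ℕ, ∃ a, ∃ ha : a ∉ K, (∃ κ' ∈ K, T.Adj a κ') ∧
        (T.induce (Kᶜ : Set V)).Reachable ⟨zf n, hzK n⟩ ⟨a, ha⟩ := fun n =>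
      exists_boundary ((hconn.preconnected (zf n) κ₀).some) (hzK n) hκ₀
    choose af haK hadjK hreach using hbd
    set Bd : Set V := {a | a ∉ K ∧ ∃ κ' ∈ K, T.Adj a κ'} with hBd
    have hBdfin : Bd.Finite := by
      refine Set.Finite.subset (hKfin.biUnion fun κ _ => hnbfin κ) ?_
      rintro a ⟨_, κ', hκ', hadj⟩
      exact Set.mem_biUnion hκ' hadj.symm
    haveI : Finite (↥Bd) := hBdfin.to_subtype
    set F : ℕ → ↥Bd := fun n => ⟨af n, haK n, hadjK n⟩ with hF
    obtain ⟨a₀, ha₀⟩ := Finite.exists_infinite_fiber F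
    have hinf : ∀ N : ℕ, ∃ n, N ≤ n ∧ F n = a₀ := by
      intro N
      have hinf' : (F ⁻¹' {a₀}).Infinite := Set.infinite_coe_iff.mp ha₀
      obtain ⟨n, hn, hgt⟩ := hinf'.exists_gt N
      exact ⟨n, hgt.le, hn⟩
    have ha₀K : (a₀ : V) ∈ (Kᶜ : Set V) := a₀.2.1
    obtain ⟨ψ, hper, hψagree⟩ := hK ⟨(a₀ : V), ha₀K⟩
    have hper' : ∃ Γ : Subgroup (Equiv.Perm V),
        (∀ γ ∈ Γ, ∀ u w : V, T.Adj (γ u) (γ w) ↔ T.Adj u w) ∧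
        (∀ γ ∈ Γ, ∀ v, ψ (γ v) = ψ v) ∧
        Finite (Quot (fun a b : V => ∃ γ ∈ Γ, γ a = b)) := hper
    obtain ⟨Γ, hΓadj, hΓψ, hΓfin⟩ := hper'
    have hdeepcbe : ∀ n, F n = a₀ → CBE T φ ψ n x (zf n) := by
      intro n hFn
      refine cbe_trans (T := T) (φ := φ) (ψ := φ) (χ := ψ) (hzS n) (cbe_refl ?_)
      intro v
      obtain ⟨p, hp⟩ := hconn.exists_walk_length_eq_dist (zf n) (v : V)
      have hsupp : ∀ w ∈ p.support, w ∈ (Kᶜ : Set V) := by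
        intro w hw
        simp only [Set.mem_compl_iff]
        intro hwK
        have h1 : T.dist (zf n) w ≤ p.length := dist_support_le p hw
        have h2 := hzdeep n w hwK
        rw [SimpleGraph.dist_comm] at h2
        have h3 : T.dist (zf n) (v : V) ≤ n := v.2
        omega
      have hr := reachable_induce_of_walk p hsupp
      have hav : (T.induce (Kᶜ : Set V)).Reachable ⟨(a₀ : V), ha₀K⟩
          ⟨(v : V), hsupp _ p.end_mem_support⟩ := by
        have h1 := hreach n
        have h2 : af n = (a₀ : V) := congrArg Subtype.val hFn
        have h1' : (T.induce (Kᶜ : Set V)).Reachable ⟨zf n, hzK n⟩ ⟨(a₀ : V), ha₀K⟩ := by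
          have h2' : (⟨af n, haK n⟩ : (Kᶜ : Set V)) = ⟨(a₀ : V), ha₀K⟩ := Subtype.ext h2
          exact h2' ▸ h1
        exact (h1'.symm).trans hr
      exact hψagree ⟨(v : V), _⟩ hav
    set rel : V → V → Prop := fun a b => ∃ γ ∈ Γ, γ a = b with hrel
    have hrel_equiv : Equivalence rel := by
      constructor
      · exact fun a => ⟨1, Γ.one_mem, rfl⟩
      · rintro a b ⟨γ, hγ, rfl⟩
        exact ⟨γ⁻¹, Γ.inv_mem hγ, by simp⟩
      · rintro a b c ⟨γ₁, hγ₁, rfl⟩ ⟨γ₂, hγ₂, rfl⟩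
        exact ⟨γ₂ * γ₁, Γ.mul_mem hγ₂ hγ₁, rfl⟩
    set C : ℕ → Set (Quot rel) := fun n => {c | ∃ z, Quot.mk rel z = c ∧ CBE T φ ψ n x z}
      with hC
    have hCdec : ∀ n, C (n+1) ⊆ C n := by
      rintro n c ⟨z, hzc, hcbe⟩
      exact ⟨z, hzc, cbe_mono hconn (Nat.le_succ n) hcbe⟩
    have hCne : ∀ n, (C n).Nonempty := by
      intro n
      obtain ⟨m, hm, hFm⟩ := hinf n
      exact ⟨Quot.mk rel (zf m), ⟨zf m, rfl, cbe_mono hconn hm (hdeepcbe m hFm)⟩⟩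
    haveI : Finite (Quot rel) := hΓfin
    obtain ⟨c, hc⟩ := iInter_nonempty C hCdec hCne
    obtain ⟨w₀, hw₀⟩ := Quot.exists_rep c
    have hcross : ∀ n, CBE T φ ψ n x w₀ := by
      intro n
      obtain ⟨z, hzc, hcbe⟩ := hc n
      have hzw : rel z w₀ := by
        rw [← hw₀] at hzc
        exact (hrel_equiv.eqvGen_iff).mp (Quot.eq.mp hzc)
      obtain ⟨γ, hγ, hγz⟩ := hzw
      have hauto := auto_cbe hconn (χ := ψ) (ψ := ψ) (γ : V ≃ V) (hΓadj γ hγ)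
        (fun v => hΓψ γ hγ v) n z
      rw [hγz] at hauto
      exact cbe_trans hcbe hauto
    obtain ⟨g, hgadj, hgcol⟩ := koenig hconn hballfin hcross
    set D : ℕ → Set (Quot rel) := fun n => {c | ∃ z ∈ S n, Quot.mk rel (g z) = c} with hD
    have hDdec : ∀ n, D (n+1) ⊆ D n := by
      rintro n c ⟨z, hz, hq⟩
      exact ⟨z, hSdec n hz, hq⟩
    have hmemb : ∀ (n : ℕ) (z : V), z ∈ S n ↔ Quot.mk rel (g z) ∈ D n := by
      intro n z
      constructor
      · intro h; exact ⟨z, h, rfl⟩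
      · rintro ⟨z', hz', hq⟩
        have hrel' : rel (g z') (g z) := (hrel_equiv.eqvGen_iff).mp (Quot.eq.mp hq)
        obtain ⟨γ, hγ, hγgz'⟩ := hrel'
        set e : V ≃ V := g.trans ((γ : V ≃ V).trans g.symm) with he
        have hgadj' : ∀ u w : V, T.Adj (g.symm u) (g.symm w) ↔ T.Adj u w := by
          intro u w
          conv_rhs => rw [← Equiv.apply_symm_apply g u, ← Equiv.apply_symm_apply g w]
          exact (hgadj _ _).symm
        have headj : ∀ u w : V, T.Adj (e u) (e w) ↔ T.Adj u w := by
          intro u w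
          show T.Adj (g.symm (γ (g u))) (g.symm (γ (g w))) ↔ _
          rw [hgadj' _ _, hΓadj γ hγ _ _, hgadj _ _]
        have hecol : ∀ v, φ (e v) = φ v := by
          intro v
          have hsymm : ∀ u, φ (g.symm u) = ψ u := by
            intro u
            have := hgcol (g.symm u)
            rw [Equiv.apply_symm_apply] at this
            exact this.symm
          show φ (g.symm (γ (g v))) = φ v
          rw [hsymm, hΓψ γ hγ, hgcol]
        have hcbe' := auto_cbe hconn (χ := φ) (ψ := φ) e headj hecol n z'
        have hez : e z' = z := by
          show g.symm (γ (g z')) = z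
          rw [hγgz', Equiv.symm_apply_apply]
        rw [hez] at hcbe'
        exact cbe_trans hz' hcbe'
    obtain ⟨N, hN⟩ := antitone_stab D hDdec 0 (Set.toFinite _)
    refine ⟨N, fun n hn => ?_⟩
    ext z
    rw [hmemb n z, hmemb N z, hN n hn]
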